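/- The function x ↦ h(x)/(x+1) is strictly decreasing on the interval (-1, ∞), and the function x ↦ h(x)·(x+1) is strictly increasing on the interval (-1, ∞). -/

import Mathlib

open Filter Finset Topology

/-- The Thue–Morse sequence with values `±1`: `u n = (-1)^(s₂ n)` where `s₂ n`
is the sum of the binary digits of `n`. -/
def u (n : ℕ) : ℤ := (-1) ^ (Nat.digits 2 n).sum


lemma u_pm (n : ℕ) : u n = 1 ∨ u n = -1 := by
  rcases Nat.even_or_odd (Nat.digits 2 n).sum with hp | hp
  · exact Or.inl hp.neg_one_pow
  · exact Or.inr hp.neg_one_pow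

lemma u_even (k : ℕ) : u (2 * k) = u k := by
  rcases Nat.eq_zero_or_pos k with rfl | hk
  · norm_num
  · unfold u
    rw [Nat.digits_def' (by norm_num : 1 < 2) (by omega)]
    simp [Nat.mul_div_cancel_left _ (by norm_num : 0 < 2), Nat.mul_mod_right]

lemma u_odd (k : ℕ) : u (2 * k + 1) = -u k := by
  unfold u
  rw [Nat.digits_def' (by norm_num : 1 < 2) (by omega)]
  have h1 : (2 * k + 1) % 2 = 1 := by omega
  have h2 : (2 * k + 1) / 2 = k := by omega
  rw [h1, h2]
  simp [pow_succ, pow_add, mul_comm]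

lemma S_even (M : ℕ) : ∑ k ∈ range (2 * M), u k = 0 := by
  induction M with
  | zero => simp
  | succ M ih =>
    have : 2 * (M + 1) = 2 * M + 1 + 1 := by ring
    rw [this, Finset.sum_range_succ, Finset.sum_range_succ, ih, u_odd, u_even]
    ring

lemma S_bound (m : ℕ) : -1 ≤ ∑ k ∈ range m, u k ∧ ∑ k ∈ range m, u k ≤ 1 := by
  rcases Nat.even_or_odd m with ⟨M, hM⟩ | ⟨M, hM⟩
  · subst hM
    rw [← two_mul, S_even]; norm_num
  · subst hM
    rw [Finset.sum_range_succ, S_even]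
    rcases u_pm M with hu | hu <;> simp [u_even, hu]

lemma T_bound (N : ℕ) : -2 ≤ ∑ n ∈ Icc 1 N, u n ∧ ∑ n ∈ Icc 1 N, u n ≤ 0 := by
  have key : ∑ k ∈ range (N + 1), u k = u 0 + ∑ n ∈ Icc 1 N, u n := by
    rw [Finset.range_eq_Ico, ← Finset.sum_Ico_consecutive _ (by omega : 0 ≤ 1) (by omega : 1 ≤ N + 1)]
    congr 1
  have h0 : u 0 = 1 := by norm_num [u]
  have := S_bound (N + 1)
  omega

lemma abel_bound (c : ℕ → ℝ) (hmono : ∀ n : ℕ, 1 ≤ n → c n ≤ c (n + 1))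
    (hneg : ∀ n : ℕ, 1 ≤ n → c n ≤ 0) (N : ℕ) (hN : 1 ≤ N) :
    ((∑ n ∈ Icc 1 N, u n : ℤ) : ℝ) * c N ≤ ∑ n ∈ Icc 1 N, (u n : ℝ) * c n ∧
      ∑ n ∈ Icc 1 N, (u n : ℝ) * c n ≤ (((∑ n ∈ Icc 1 N, u n : ℤ) : ℝ) + 2) * c N - 2 * c 1 := by
  induction N, hN using Nat.le_induction with
  | base =>
    simp only [Finset.Icc_self, Finset.sum_singleton]
    exact ⟨le_refl _, by nlinarith⟩
  | succ N hN ih =>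
    have hstep : ∀ f : ℕ → ℝ, ∑ n ∈ Icc 1 (N + 1), f n = ∑ n ∈ Icc 1 N, f n + f (N + 1) :=
      fun f => Finset.sum_Icc_succ_top (by omega) f
    have hstepz : ∑ n ∈ Icc 1 (N + 1), u n = ∑ n ∈ Icc 1 N, u n + u (N + 1) :=
      Finset.sum_Icc_succ_top (by omega) u
    obtain ⟨hT1, hT2⟩ := T_bound N
    have hT1' : (-2 : ℝ) ≤ ((∑ n ∈ Icc 1 N, u n : ℤ) : ℝ) := by exact_mod_cast hT1
    have hT2' : ((∑ n ∈ Icc 1 N, u n : ℤ) : ℝ) ≤ 0 := by exact_mod_cast hT2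
    have hc := hmono N hN
    rw [hstep, hstepz]
    push_cast at ih hT1' hT2' ⊢
    constructor
    · nlinarith [ih.1, mul_le_mul_of_nonpos_left hc hT2']
    · nlinarith [ih.2, mul_le_mul_of_nonneg_left hc (by linarith : (0:ℝ) ≤ (∑ x ∈ Icc 1 N, (u x : ℝ)) + 2)]

lemma L_bound (c : ℕ → ℝ) (hmono : ∀ n : ℕ, 1 ≤ n → c n ≤ c (n + 1))
    (hneg : ∀ n : ℕ, 1 ≤ n → c n ≤ 0) (N : ℕ) (hN : 1 ≤ N) :
    0 ≤ ∑ n ∈ Icc 1 N, (u n : ℝ) * c n ∧ ∑ n ∈ Icc 1 N, (u n : ℝ) * c n ≤ -2 * c 1 := by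
  obtain ⟨h1, h2⟩ := abel_bound c hmono hneg N hN
  obtain ⟨hT1, hT2⟩ := T_bound N
  have hT1' : (-2 : ℝ) ≤ ((∑ n ∈ Icc 1 N, u n : ℤ) : ℝ) := by exact_mod_cast hT1
  have hT2' : ((∑ n ∈ Icc 1 N, u n : ℤ) : ℝ) ≤ 0 := by exact_mod_cast hT2
  have hcN := hneg N hN
  constructor
  · nlinarith [mul_nonneg (by linarith : (0:ℝ) ≤ -((∑ n ∈ Icc 1 N, u n : ℤ) : ℝ)) (by linarith : (0:ℝ) ≤ -c N)]
  · nlinarith [mul_nonpos_of_nonneg_of_nonpos (by linarith : (0:ℝ) ≤ ((∑ n ∈ Icc 1 N, u n : ℤ) : ℝ) + 2) hcN]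

lemma den_pos {t : ℝ} (ht : -1 < t) {n : ℕ} (hn : 1 ≤ n) :
    0 < 2 * (n : ℝ) + t ∧ 0 < 2 * (n : ℝ) + 1 + t := by
  have h1 : (1:ℝ) ≤ (n:ℝ) := by exact_mod_cast hn
  constructor <;> nlinarith

lemma log_prod_eq {t : ℝ} (ht : -1 < t) (N : ℕ) :
    Real.log (∏ n ∈ Icc 1 N, ((2 * (n : ℝ) + t) / (2 * (n : ℝ) + 1 + t)) ^ (u n))
      = ∑ n ∈ Icc 1 N, (u n : ℝ) * Real.log ((2 * (n : ℝ) + t) / (2 * (n : ℝ) + 1 + t)) := by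
  rw [Real.log_prod]
  · exact Finset.sum_congr rfl fun n hn => Real.log_zpow _ _
  · intro n hn
    obtain ⟨h1, h2⟩ := den_pos ht (Finset.mem_Icc.mp hn).1
    exact zpow_ne_zero _ (ne_of_gt (div_pos h1 h2))

lemma key (h : ℝ → ℝ)
    (hh : ∀ x : ℝ, -2 < x →
      Tendsto (fun N : ℕ => ∏ n ∈ Finset.Icc 1 N,
        ((2 * (n : ℝ) + x) / (2 * (n : ℝ) + 1 + x)) ^ (u n)) atTop (𝓝 (h x)))
    (hpos : ∀ x : ℝ, -2 < x → 0 < h x) {x y : ℝ} (hx : -1 < x) (hxy : x < y) :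
    h y ≤ h x ∧ h x * (x + 1) < h y * (y + 1) := by
  have hy : -1 < y := hx.trans hxy
  have hx2 : -2 < x := by linarith
  have hy2 : -2 < y := by linarith
  set c : ℕ → ℝ := fun n =>
    Real.log ((2 * (n : ℝ) + x) / (2 * (n : ℝ) + 1 + x))
      - Real.log ((2 * (n : ℝ) + y) / (2 * (n : ℝ) + 1 + y)) with hc
  have hneg : ∀ n : ℕ, 1 ≤ n → c n ≤ 0 := by
    intro n hn
    obtain ⟨hx1, hx2'⟩ := den_pos hx hn
    obtain ⟨hy1, hy2'⟩ := den_pos hy hn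
    have hle : (2 * (n : ℝ) + x) / (2 * (n : ℝ) + 1 + x)
        ≤ (2 * (n : ℝ) + y) / (2 * (n : ℝ) + 1 + y) := by
      rw [div_le_div_iff₀ hx2' hy2']
      nlinarith
    have := Real.log_le_log (div_pos hx1 hx2') hle
    simp only [hc]
    linarith
  have hmono : ∀ n : ℕ, 1 ≤ n → c n ≤ c (n + 1) := by
    intro n hn
    obtain ⟨px1, px2⟩ := den_pos hx hn
    obtain ⟨py1, py2⟩ := den_pos hy hn
    obtain ⟨qx1, qx2⟩ := den_pos hx (Nat.le_succ_of_le hn)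
    obtain ⟨qy1, qy2⟩ := den_pos hy (Nat.le_succ_of_le hn)
    push_cast at qx1 qx2 qy1 qy2
    have hmain : (2 * (n : ℝ) + x) / (2 * (n : ℝ) + 1 + x)
          * ((2 * ((n : ℝ) + 1) + y) / (2 * ((n : ℝ) + 1) + 1 + y))
        ≤ (2 * (n : ℝ) + y) / (2 * (n : ℝ) + 1 + y)
          * ((2 * ((n : ℝ) + 1) + x) / (2 * ((n : ℝ) + 1) + 1 + x)) := by
      rw [div_mul_div_comm, div_mul_div_comm,
        div_le_div_iff₀ (by positivity) (by positivity)]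
      have hn1 : (1:ℝ) ≤ (n:ℝ) := by exact_mod_cast hn
      nlinarith [mul_nonneg (by linarith : (0:ℝ) ≤ y - x)
        (by nlinarith : (0:ℝ) ≤ 3 + 4 * (n : ℝ) + x + y)]
    have hlog := Real.log_le_log (mul_pos (div_pos px1 px2) (div_pos qy1 qy2)) hmain
    rw [Real.log_mul (div_pos px1 px2).ne' (div_pos qy1 qy2).ne',
      Real.log_mul (div_pos py1 py2).ne' (div_pos qx1 qx2).ne'] at hlog
    simp only [hc]
    push_cast
    linarith
  -- limits
  have tx := (hh x hx2).log (hpos x hx2).ne'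
  have ty := (hh y hy2).log (hpos y hy2).ne'
  have tdiff : Tendsto (fun N : ℕ => ∑ n ∈ Icc 1 N, (u n : ℝ) * c n) atTop
      (𝓝 (Real.log (h x) - Real.log (h y))) := by
    have := tx.sub ty
    refine this.congr fun N => ?_
    rw [log_prod_eq hx, log_prod_eq hy, ← Finset.sum_sub_distrib]
    exact Finset.sum_congr rfl fun n hn => by simp only [hc]; ring
  have hge : 0 ≤ Real.log (h x) - Real.log (h y) :=
    ge_of_tendsto tdiff (eventually_atTop.2 ⟨1, fun N hN => (L_bound c hmono hneg N hN).1⟩)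
  have hle : Real.log (h x) - Real.log (h y) ≤ -2 * c 1 :=
    le_of_tendsto tdiff (eventually_atTop.2 ⟨1, fun N hN => (L_bound c hmono hneg N hN).2⟩)
  constructor
  · have := Real.exp_le_exp.mpr (by linarith : Real.log (h y) ≤ Real.log (h x))
    rwa [Real.exp_log (hpos y hy2), Real.exp_log (hpos x hx2)] at this
  · -- elementary strict bound
    have ha : (0:ℝ) < x + 1 := by linarith
    have hb : (0:ℝ) < y - x := by linarith
    have hb1 : (0:ℝ) < y + 1 := by linarith
    have h2x : (0:ℝ) < 2 + x := by linarith
    have h3x : (0:ℝ) < 3 + x := by linarith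
    have h2y : (0:ℝ) < 2 + y := by linarith
    have h3y : (0:ℝ) < 3 + y := by linarith
    have hpoly : (3 + x)^2 * ((2 + y)^2 * (x + 1)) < (2 + x)^2 * ((3 + y)^2 * (y + 1)) := by
      nlinarith [mul_pos ha hb, mul_pos hb hb, mul_pos (mul_pos hb hb) hb,
        mul_pos (mul_pos ha hb) hb, mul_pos (mul_pos (mul_pos ha hb) hb) hb,
        mul_pos (mul_pos ha ha) hb, mul_pos (mul_pos (mul_pos ha ha) hb) hb,
        mul_pos (mul_pos (mul_pos (mul_pos ha ha) hb) hb) hb,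
        mul_pos (mul_pos (mul_pos ha ha) ha) hb,
        mul_pos (mul_pos (mul_pos (mul_pos ha ha) ha) hb) hb,
        mul_pos (mul_pos (mul_pos (mul_pos ha ha) ha) ha) hb]
    have big := Real.log_lt_log (by positivity) hpoly
    rw [Real.log_mul (by positivity) (by positivity),
      Real.log_mul (by positivity) (by positivity),
      Real.log_mul (by positivity) (by positivity),
      Real.log_mul (by positivity) (by positivity),
      Real.log_pow, Real.log_pow, Real.log_pow, Real.log_pow] at big
    have hc1 : c 1 = Real.log (2 + x) - Real.log (3 + x)
        - (Real.log (2 + y) - Real.log (3 + y)) := by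
      simp only [hc]
      rw [Real.log_div (by push_cast; linarith) (by push_cast; linarith),
        Real.log_div (by push_cast; linarith) (by push_cast; linarith)]
      norm_num
    have final : Real.log (h x) + Real.log (x + 1) < Real.log (h y) + Real.log (y + 1) := by
      rw [hc1] at hle
      push_cast at big
      linarith
    have := Real.exp_lt_exp.mpr final
    rw [Real.exp_add, Real.exp_add, Real.exp_log (hpos x hx2), Real.exp_log ha,
      Real.exp_log (hpos y hy2), Real.exp_log hb1] at this
    exact this

/-- If `h x` is, for `x > -2`, the (positive) limit of the partial products
`∏_{n=1}^{N} ((2n+x)/(2n+1+x))^{u_n}`, then `x ↦ h(x)/(x+1)` is strictly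
decreasing on `(-1, ∞)` and `x ↦ h(x)·(x+1)` is strictly increasing on `(-1, ∞)`. -/
theorem stmt_9 (h : ℝ → ℝ)
    (hh : ∀ x : ℝ, -2 < x →
      Tendsto (fun N : ℕ => ∏ n ∈ Finset.Icc 1 N,
        ((2 * (n : ℝ) + x) / (2 * (n : ℝ) + 1 + x)) ^ (u n)) atTop (𝓝 (h x)))
    (hpos : ∀ x : ℝ, -2 < x → 0 < h x) :
    StrictAntiOn (fun x => h x / (x + 1)) (Set.Ioi (-1 : ℝ)) ∧
      StrictMonoOn (fun x => h x * (x + 1)) (Set.Ioi (-1 : ℝ)) := by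
  constructor
  · intro a ha b hb hab
    obtain ⟨h1, -⟩ := key h hh hpos (Set.mem_Ioi.mp ha) hab
    have ha2 : (-2 : ℝ) < a := by have := Set.mem_Ioi.mp ha; linarith
    have hb2 : (-2 : ℝ) < b := by have := Set.mem_Ioi.mp hb; linarith
    have ha1 : (0:ℝ) < a + 1 := by have := Set.mem_Ioi.mp ha; linarith
    have hb1 : (0:ℝ) < b + 1 := by have := Set.mem_Ioi.mp hb; linarith
    have step1 : h b / (b + 1) < h b / (a + 1) :=
      div_lt_div_of_pos_left (hpos b hb2) ha1 (by linarith)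
    have step2 : h b / (a + 1) ≤ h a / (a + 1) := by gcongr
    simp only
    linarith
  · intro a ha b hb hab
    exact (key h hh hpos (Set.mem_Ioi.mp ha) hab).2
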